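/- Let K ≥ 1 be an integer and for integers i with 2 ≤ i ≤ 2^K define j_i = 2K + 2 + 5(i−1) + 3 Σ_{h=1}^{K−1} ⌊ (i−1) / 2^{K−h} ⌋ and L(i) = ⌊ log₂(i−1) ⌋. Then j_i satisfies the two-sided bound: 2K + 2 + 5(i−1) + 3(1 − 2^{−L(i)})(i−1) − 3 L(i) ≤ j_i ≤ 2K + 2 + 5(i−1) + 3(1 − 2^{−L(i)})(i−1). -/

import Mathlib

/-- Two-sided bound on the oracle-application indices of the iterated-subroutine scheme:
for `2 ≤ i ≤ 2^K`, with `j_i = 2K + 2 + 5(i−1) + 3 Σ_{h=1}^{K−1} ⌊(i−1)/2^{K−h}⌋` and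
`L(i) = ⌊log₂(i−1)⌋`, one has
`2K+2+5(i−1)+3(1−2^{−L(i)})(i−1)−3L(i) ≤ j_i ≤ 2K+2+5(i−1)+3(1−2^{−L(i)})(i−1)`. -/
theorem subroutine_step_indices_bounds (K : ℕ) (hK : 1 ≤ K) (i : ℕ) (hi1 : 2 ≤ i)
    (hi2 : i ≤ 2 ^ K) :
    letI j : ℕ := 2 * K + 2 + 5 * (i - 1) + 3 * ∑ h ∈ Finset.Icc 1 (K - 1), (i - 1) / 2 ^ (K - h)
    letI L : ℕ := Nat.log 2 (i - 1)
    2 * (K : ℝ) + 2 + 5 * ((i : ℝ) - 1) + 3 * (1 - ((2 : ℝ) ^ L)⁻¹) * ((i : ℝ) - 1)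
        - 3 * (L : ℝ) ≤ (j : ℝ) ∧
      (j : ℝ) ≤ 2 * (K : ℝ) + 2 + 5 * ((i : ℝ) - 1)
        + 3 * (1 - ((2 : ℝ) ^ L)⁻¹) * ((i : ℝ) - 1) := by
  set n := i - 1 with hn
  set L := Nat.log 2 n with hLdef
  have hn1 : 1 ≤ n := by omega
  have hn0 : n ≠ 0 := by omega
  have hnK : n < 2 ^ K := by omega
  have hLK : L ≤ K - 1 := by
    have := Nat.log_lt_of_lt_pow hn0 hnK
    omega
  have hreindex : ∑ h ∈ Finset.Icc 1 (K-1), n / 2^(K-h)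
      = ∑ m ∈ Finset.Icc 1 (K-1), n / 2^m := by
    refine Finset.sum_nbij' (fun h => K - h) (fun m => K - m) ?_ ?_ ?_ ?_ ?_ <;>
      intros a ha <;> simp only [Finset.mem_Icc] at * <;> first | omega | (congr 1; omega)
  have hsplit : ∑ m ∈ Finset.Icc 1 (K-1), n / 2^m = ∑ m ∈ Finset.Icc 1 L, n / 2^m := by
    rw [show Finset.Icc 1 (K-1) = Finset.Ioc 0 (K-1) by rw [← Finset.Icc_add_one_left_eq_Ioc]; rfl,
        show Finset.Icc 1 L = Finset.Ioc 0 L by rw [← Finset.Icc_add_one_left_eq_Ioc]; rfl,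
        ← Finset.sum_Ioc_consecutive _ (Nat.zero_le L) hLK]
    have : ∑ m ∈ Finset.Ioc L (K-1), n / 2^m = 0 := by
      apply Finset.sum_eq_zero
      intro m hm
      simp only [Finset.mem_Ioc] at hm
      apply Nat.div_eq_of_lt
      calc n < 2 ^ (L + 1) := Nat.lt_pow_succ_log_self (by norm_num) n
        _ ≤ 2 ^ m := Nat.pow_le_pow_right (by norm_num) (by omega)
    omega
  set S := ∑ h ∈ Finset.Icc 1 (K-1), n / 2^(K-h) with hS
  have hSeq : S = ∑ m ∈ Finset.Icc 1 L, n / 2^m := by rw [hreindex, hsplit]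
  -- geometric sum
  have hgeom : ∑ m ∈ Finset.Icc 1 L, (((2:ℝ)^m)⁻¹) = 1 - ((2:ℝ)^L)⁻¹ := by
    induction L with
    | zero => simp
    | succ k ih =>
      rw [Finset.sum_Icc_succ_top (by omega), ih]
      field_simp
      ring
  have hterm_le : ∀ m ∈ Finset.Icc 1 L, ((n / 2^m : ℕ) : ℝ) ≤ (n:ℝ) * ((2:ℝ)^m)⁻¹ := by
    intro m _
    have := Nat.cast_div_le (α := ℝ) (m := n) (n := 2^m)
    rw [div_eq_mul_inv] at this
    simpa using this
  have hterm_ge : ∀ m ∈ Finset.Icc 1 L, (n:ℝ) * ((2:ℝ)^m)⁻¹ - 1 ≤ ((n / 2^m : ℕ) : ℝ) := by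
    intro m _
    have h2 : (0:ℝ) < 2^m := by positivity
    rw [sub_le_iff_le_add, mul_inv_le_iff₀ h2]
    have : n < 2^m * (n / 2^m) + 2^m := by
      have h1 := Nat.div_add_mod n (2^m)
      have h2' : n % 2^m < 2^m := Nat.mod_lt _ (by positivity)
      omega
    calc (n:ℝ) ≤ (2^m * (n / 2^m) + 2^m : ℕ) := by exact_mod_cast Nat.le_of_lt this
      _ = (((n/2^m : ℕ):ℝ) + 1) * 2^m := by push_cast; ring
  have hS_le : (S:ℝ) ≤ (n:ℝ) * (1 - ((2:ℝ)^L)⁻¹) := by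
    rw [hSeq]
    push_cast
    calc ∑ m ∈ Finset.Icc 1 L, ((n / 2^m : ℕ) : ℝ)
        ≤ ∑ m ∈ Finset.Icc 1 L, (n:ℝ) * ((2:ℝ)^m)⁻¹ := Finset.sum_le_sum hterm_le
      _ = (n:ℝ) * (1 - ((2:ℝ)^L)⁻¹) := by rw [← Finset.mul_sum, hgeom]
  have hS_ge : (n:ℝ) * (1 - ((2:ℝ)^L)⁻¹) - L ≤ (S:ℝ) := by
    rw [hSeq]
    push_cast
    have hcard : (Finset.Icc 1 L).card = L := by simp
    calc (n:ℝ) * (1 - ((2:ℝ)^L)⁻¹) - L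
        = ∑ m ∈ Finset.Icc 1 L, ((n:ℝ) * ((2:ℝ)^m)⁻¹ - 1) := by
          rw [Finset.sum_sub_distrib, ← Finset.mul_sum, hgeom, Finset.sum_const, hcard]
          push_cast; ring
      _ ≤ ∑ m ∈ Finset.Icc 1 L, ((n / 2^m : ℕ) : ℝ) := Finset.sum_le_sum hterm_ge
  have hni : (n:ℝ) = (i:ℝ) - 1 := by
    rw [hn]; push_cast [Nat.cast_sub (by omega : 1 ≤ i)]; ring
  constructor
  · push_cast
    rw [← hni]
    linarith
  · push_cast
    rw [← hni]
    linarith
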